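/- arXiv:2410.15535 — 2 statements merged into one kernel-verified Lean document; each statement's English description precedes it below -/
import Mathlib

section
/- Let c, ε, δ ∈ ℂ satisfy ε² + 2δc = 0, and define G(z) = c·z + ε + δ·z⁻¹ for z ≠ 0. Then for every r > 0: (i) ∫₀^{2π} G(r·e^{iθ})² dθ = 0, and (ii) 4·r²·∫₀^{2π} ‖G′(r·e^{iθ})‖² dθ = 4·∫₀^{2π} ‖G(r·e^{iθ})‖² dθ − 8π·‖ε‖², where G′(z) = c − δ·z⁻² is the complex derivative of G. In particular, if ε ≠ 0 then 4·r²·∫₀^{2π} ‖G′(r·e^{iθ})‖² dθ < 4·∫₀^{2π} ‖G(r·e^{iθ})‖² dθ for every r > 0. -/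
open Complex Real

private lemma int_exp_zero' {c : ℂ} (hc : c ≠ 0) (h1 : Complex.exp (c * ((2 * π : ℝ) : ℂ)) = 1) :
    (∫ θ in (0:ℝ)..(2 * π), Complex.exp (c * θ)) = 0 := by
  push_cast at h1
  rw [integral_exp_mul_complex hc]
  norm_num [h1]

private lemma exp_helper (n : ℤ) : Complex.exp (((n : ℂ) * Complex.I) * ((2 * π : ℝ) : ℂ)) = 1 := by
  have h : ((n : ℂ) * Complex.I) * ((2 * π : ℝ) : ℂ) = (n : ℂ) * (2 * π * Complex.I) := by
    push_cast; ring
  rw [h, Complex.exp_int_mul, Complex.exp_two_pi_mul_I, one_zpow]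

private lemma master (A B C D E : ℂ) :
    (∫ θ in (0:ℝ)..(2 * π),
      (A * Complex.exp ((2 * Complex.I) * θ) + B * Complex.exp (Complex.I * θ)
        + C + D * Complex.exp ((-Complex.I) * θ)
        + E * Complex.exp ((-2 * Complex.I) * θ))) = 2 * π * C := by
  have ii : ∀ K k : ℂ, IntervalIntegrable (fun θ : ℝ => K * Complex.exp (k * θ))
      MeasureTheory.volume 0 (2 * π) := by
    intro K k
    apply Continuous.intervalIntegrable
    fun_prop
  have icst : IntervalIntegrable (fun _ : ℝ => C) MeasureTheory.volume 0 (2 * π) :=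
    intervalIntegrable_const
  have h2 : (∫ θ in (0:ℝ)..(2*π), Complex.exp ((2 * Complex.I) * θ)) = 0 := by
    apply int_exp_zero' (mul_ne_zero two_ne_zero Complex.I_ne_zero)
    simpa using exp_helper 2
  have h1 : (∫ θ in (0:ℝ)..(2*π), Complex.exp (Complex.I * θ)) = 0 := by
    apply int_exp_zero' Complex.I_ne_zero
    simpa using exp_helper 1
  have hm1 : (∫ θ in (0:ℝ)..(2*π), Complex.exp ((-Complex.I) * θ)) = 0 := by
    apply int_exp_zero' (neg_ne_zero.mpr Complex.I_ne_zero)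
    have := exp_helper (-1); push_cast at this ⊢; simpa using this
  have hm2 : (∫ θ in (0:ℝ)..(2*π), Complex.exp ((-2 * Complex.I) * θ)) = 0 := by
    apply int_exp_zero' (mul_ne_zero (by norm_num) Complex.I_ne_zero)
    have := exp_helper (-2); push_cast at this ⊢; simpa using this
  rw [intervalIntegral.integral_add ((((ii A _).add (ii B _)).add icst).add (ii D _)) (ii E _),
      intervalIntegral.integral_add (((ii A _).add (ii B _)).add icst) (ii D _),
      intervalIntegral.integral_add ((ii A _).add (ii B _)) icst,
      intervalIntegral.integral_add (ii A _) (ii B _),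
      intervalIntegral.integral_const_mul, intervalIntegral.integral_const_mul,
      intervalIntegral.integral_const_mul, intervalIntegral.integral_const_mul,
      intervalIntegral.integral_const, h2, h1, hm1, hm2]
  simp [Complex.real_smul]

/-- For the Laurent polynomial `G(z) = c·z + ε + δ·z⁻¹` with `ε² + 2δc = 0`:
the circle integral of `G²` vanishes, one has
`4r²∫‖G′‖² = 4∫‖G‖² − 8π‖ε‖²`, and if `ε ≠ 0` the strict inequality
`4r²∫‖G′‖² < 4∫‖G‖²` holds for every `r > 0`. -/
theorem stmt_17 (c ε δ : ℂ) (hper : ε ^ 2 + 2 * δ * c = 0) (G : ℂ → ℂ)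
    (hG : ∀ z : ℂ, z ≠ 0 → G z = c * z + ε + δ * z⁻¹) :
    ∀ r : ℝ, 0 < r →
      (∫ θ in (0:ℝ)..(2 * π),
          (G ((r : ℂ) * Complex.exp (θ * Complex.I))) ^ 2 = 0)
      ∧ (4 * r ^ 2 * ∫ θ in (0:ℝ)..(2 * π),
            ‖deriv G ((r : ℂ) * Complex.exp (θ * Complex.I))‖ ^ 2
          = 4 * (∫ θ in (0:ℝ)..(2 * π),
              ‖G ((r : ℂ) * Complex.exp (θ * Complex.I))‖ ^ 2)
            - 8 * π * ‖ε‖ ^ 2)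
      ∧ (ε ≠ 0 →
          4 * r ^ 2 * ∫ θ in (0:ℝ)..(2 * π),
              ‖deriv G ((r : ℂ) * Complex.exp (θ * Complex.I))‖ ^ 2
            < 4 * ∫ θ in (0:ℝ)..(2 * π),
                ‖G ((r : ℂ) * Complex.exp (θ * Complex.I))‖ ^ 2) := by
  intro r hr
  have hR : (r : ℂ) ≠ 0 := Complex.ofReal_ne_zero.mpr (ne_of_gt hr)
  have hr0 : r ≠ 0 := ne_of_gt hr
  -- derivative of G away from 0
  have hderiv : ∀ z : ℂ, z ≠ 0 → deriv G z = c - δ / z ^ 2 := by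
    intro z hz
    have hev : G =ᶠ[nhds z] fun w => c * w + ε + δ * w⁻¹ := by
      filter_upwards [eventually_ne_nhds hz] with w hw using hG w hw
    rw [hev.deriv_eq]
    have h1 : HasDerivAt (fun w : ℂ => c * w + ε + δ * w⁻¹) (c - δ / z ^ 2) z := by
      have ha : HasDerivAt (fun w : ℂ => c * w) c z := by
        simpa using (hasDerivAt_id z).const_mul c
      have hb : HasDerivAt (fun w : ℂ => δ * w⁻¹) (δ * (-(z ^ 2)⁻¹)) z :=
        (hasDerivAt_inv hz).const_mul δ
      have := (ha.add_const ε).add hb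
      refine this.congr_deriv ?_
      ring
    exact h1.deriv
  -- pointwise exponential algebra
  have expfacts : ∀ θ : ℝ,
      Complex.exp ((2 * Complex.I) * θ) = Complex.exp (θ * Complex.I) ^ 2 ∧
      Complex.exp (Complex.I * θ) = Complex.exp (θ * Complex.I) ∧
      Complex.exp ((-Complex.I) * θ) = (Complex.exp (θ * Complex.I))⁻¹ ∧
      Complex.exp ((-2 * Complex.I) * θ) = (Complex.exp (θ * Complex.I) ^ 2)⁻¹ := by
    intro θ
    refine ⟨?_, by ring_nf, ?_, ?_⟩
    · rw [show (2 * Complex.I) * (θ:ℂ) = (θ * Complex.I) + (θ * Complex.I) by ring,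
        Complex.exp_add, sq]
    · rw [show (-Complex.I) * (θ:ℂ) = -(θ * Complex.I) by ring, Complex.exp_neg]
    · rw [show (-2 * Complex.I) * (θ:ℂ) = -((θ * Complex.I) + (θ * Complex.I)) by ring,
        Complex.exp_neg, Complex.exp_add, sq]
  -- Part 1
  have key1 : ∀ θ : ℝ, (G ((r : ℂ) * Complex.exp (θ * Complex.I))) ^ 2 =
      (c ^ 2 * (r:ℂ) ^ 2) * Complex.exp ((2 * Complex.I) * θ)
        + (2 * c * ε * r) * Complex.exp (Complex.I * θ)
        + (ε ^ 2 + 2 * δ * c)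
        + (2 * ε * δ / r) * Complex.exp ((-Complex.I) * θ)
        + (δ ^ 2 / (r:ℂ) ^ 2) * Complex.exp ((-2 * Complex.I) * θ) := by
    intro θ
    obtain ⟨e2, e1, em1, em2⟩ := expfacts θ
    set s := Complex.exp (θ * Complex.I) with hs
    have hsne : s ≠ 0 := Complex.exp_ne_zero _
    rw [hG _ (mul_ne_zero hR hsne), e2, e1, em1, em2]
    field_simp
    ring
  have I1 : (∫ θ in (0:ℝ)..(2 * π),
      (G ((r : ℂ) * Complex.exp (θ * Complex.I))) ^ 2) = 0 := by
    simp only [key1]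
    rw [master, hper, mul_zero]
  -- Part 2: norm-squared integrals
  have conjs : ∀ θ : ℝ, (starRingEnd ℂ) (Complex.exp (θ * Complex.I))
      = (Complex.exp (θ * Complex.I))⁻¹ := by
    intro θ
    rw [← Complex.exp_conj, ← Complex.exp_neg]
    congr 1
    simp [Complex.conj_I]
  have normsq : ∀ w : ℂ, (‖w‖ : ℝ) ^ 2 = (w * (starRingEnd ℂ) w).re := by
    intro w
    rw [Complex.mul_conj, Complex.ofReal_re, ← Complex.sq_norm]
  set A2 : ℂ := c * (starRingEnd ℂ) δ with hA2
  set B2 : ℂ := c * (starRingEnd ℂ) ε * r + ε * (starRingEnd ℂ) δ / r with hB2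
  set C2 : ℂ := c * (starRingEnd ℂ) c * (r:ℂ) ^ 2 + ε * (starRingEnd ℂ) ε
      + δ * (starRingEnd ℂ) δ / (r:ℂ) ^ 2 with hC2
  set D2 : ℂ := ε * (starRingEnd ℂ) c * r + δ * (starRingEnd ℂ) ε / r with hD2
  set E2 : ℂ := δ * (starRingEnd ℂ) c with hE2
  have key2 : ∀ θ : ℝ, (‖G ((r : ℂ) * Complex.exp (θ * Complex.I))‖ : ℝ) ^ 2 =
      (A2 * Complex.exp ((2 * Complex.I) * θ) + B2 * Complex.exp (Complex.I * θ)
        + C2 + D2 * Complex.exp ((-Complex.I) * θ)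
        + E2 * Complex.exp ((-2 * Complex.I) * θ)).re := by
    intro θ
    obtain ⟨e2, e1, em1, em2⟩ := expfacts θ
    rw [normsq]
    congr 1
    set s := Complex.exp (θ * Complex.I) with hs
    have hsne : s ≠ 0 := Complex.exp_ne_zero _
    rw [hG _ (mul_ne_zero hR hsne), e2, e1, em1, em2]
    simp only [map_add, map_mul, map_inv₀, Complex.conj_ofReal, conjs θ, ← hs, hA2, hB2,
      hC2, hD2, hE2]
    rw [show (starRingEnd ℂ) s = s⁻¹ from conjs θ]
    field_simp [hsne, hR]
    ring
  have key3 : ∀ θ : ℝ, (‖deriv G ((r : ℂ) * Complex.exp (θ * Complex.I))‖ : ℝ) ^ 2 =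
      ((-(c * (starRingEnd ℂ) δ) / (r:ℂ) ^ 2) * Complex.exp ((2 * Complex.I) * θ)
        + 0 * Complex.exp (Complex.I * θ)
        + (c * (starRingEnd ℂ) c + δ * (starRingEnd ℂ) δ / (r:ℂ) ^ 4)
        + 0 * Complex.exp ((-Complex.I) * θ)
        + ((-(δ * (starRingEnd ℂ) c)) / (r:ℂ) ^ 2) * Complex.exp ((-2 * Complex.I) * θ)).re := by
    intro θ
    obtain ⟨e2, e1, em1, em2⟩ := expfacts θ
    rw [normsq]
    congr 1
    set s := Complex.exp (θ * Complex.I) with hs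
    have hsne : s ≠ 0 := Complex.exp_ne_zero _
    rw [hderiv _ (mul_ne_zero hR hsne), e2, e1, em1, em2]
    simp only [map_sub, map_add, map_mul, map_div₀, map_pow, Complex.conj_ofReal, conjs θ, ← hs]
    rw [show (starRingEnd ℂ) s = s⁻¹ from conjs θ]
    field_simp [hsne, hR]
    ring
  have iiF : ∀ A B C D E : ℂ, IntervalIntegrable
      (fun θ : ℝ => A * Complex.exp ((2 * Complex.I) * θ) + B * Complex.exp (Complex.I * θ)
        + C + D * Complex.exp ((-Complex.I) * θ)
        + E * Complex.exp ((-2 * Complex.I) * θ)) MeasureTheory.volume 0 (2 * π) := by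
    intro A B C D E
    apply Continuous.intervalIntegrable
    fun_prop
  have reint : ∀ A B C D E : ℂ,
      (∫ θ in (0:ℝ)..(2 * π),
        (A * Complex.exp ((2 * Complex.I) * θ) + B * Complex.exp (Complex.I * θ)
          + C + D * Complex.exp ((-Complex.I) * θ)
          + E * Complex.exp ((-2 * Complex.I) * θ)).re) = 2 * π * C.re := by
    intro A B C D E
    have := Complex.reCLM.intervalIntegral_comp_comm (a := (0:ℝ)) (b := 2 * π) (iiF A B C D E)
    simp only [Complex.reCLM_apply] at this
    rw [this, master]
    simp
  have I2 : (∫ θ in (0:ℝ)..(2 * π),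
      ‖G ((r : ℂ) * Complex.exp (θ * Complex.I))‖ ^ 2)
      = 2 * π * (Complex.normSq c * r ^ 2 + Complex.normSq ε + Complex.normSq δ / r ^ 2) := by
    have hC2' : C2 = ((Complex.normSq c * r ^ 2 + Complex.normSq ε
        + Complex.normSq δ / r ^ 2 : ℝ) : ℂ) := by
      rw [hC2, Complex.mul_conj, Complex.mul_conj, Complex.mul_conj]
      push_cast
      ring
    simp only [key2]
    rw [reint, hC2', Complex.ofReal_re]
  have I3 : (∫ θ in (0:ℝ)..(2 * π),
      ‖deriv G ((r : ℂ) * Complex.exp (θ * Complex.I))‖ ^ 2)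
      = 2 * π * (Complex.normSq c + Complex.normSq δ / r ^ 4) := by
    have hC3 : (c * (starRingEnd ℂ) c + δ * (starRingEnd ℂ) δ / (r:ℂ) ^ 4)
        = ((Complex.normSq c + Complex.normSq δ / r ^ 4 : ℝ) : ℂ) := by
      rw [Complex.mul_conj, Complex.mul_conj]
      push_cast
      ring
    simp only [key3]
    rw [reint, hC3, Complex.ofReal_re]
  have hε : ‖ε‖ ^ 2 = Complex.normSq ε := by
    rw [Complex.sq_norm]
  have heq : 4 * r ^ 2 * (2 * π * (Complex.normSq c + Complex.normSq δ / r ^ 4))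
      = 4 * (2 * π * (Complex.normSq c * r ^ 2 + Complex.normSq ε
        + Complex.normSq δ / r ^ 2)) - 8 * π * Complex.normSq ε := by
    field_simp
    ring
  refine ⟨I1, ?_, ?_⟩
  · rw [I2, I3, hε, heq]
  · intro hεne
    rw [I2, I3, heq]
    have hnε : 0 < Complex.normSq ε := Complex.normSq_pos.mpr hεne
    have hπ : 0 < π := Real.pi_pos
    nlinarith [mul_pos hπ hnε]
end

section
/- Let 0 ≤ R₀ < R₁ and let G₋, G₊ : ℂ → ℂ be holomorphic on the annulus A(R₀,R₁) = {z ∈ ℂ : R₀ < |z| < R₁}. Fix r with R₀ < r < R₁ and set c₋ = ∫₀^{2π} G₋(r·e^{iθ}) dθ and c₊ = ∫₀^{2π} G₊(r·e^{iθ}) dθ. Then 2·r²·∫₀^{2π} ( ‖G₋′(r·e^{iθ})‖² + ‖G₊′(r·e^{iθ})‖² ) dθ ≥ 2·∫₀^{2π} ( ‖G₋(r·e^{iθ})‖² + ‖G₊(r·e^{iθ})‖² ) dθ − (1/π)·( ‖c₋‖² + ‖c₊‖² ). -/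
open Complex Real MeasureTheory Set intervalIntegral

lemma my_parseval (f : ℝ → ℂ) (hc : ContinuousOn f (Set.Icc 0 (2*π)))
    (hper : f 0 = f (0 + 2*π)) :
    Summable (fun n : ℤ => ‖fourierCoeffOn Real.two_pi_pos f n‖^2) ∧
    ∑' n : ℤ, ‖fourierCoeffOn Real.two_pi_pos f n‖^2
      = (1/(2*π)) * ∫ θ in (0:ℝ)..(2*π), ‖f θ‖^2 := by
  haveI : Fact ((0:ℝ) < 2*π) := ⟨Real.two_pi_pos⟩
  set F : C(AddCircle (2*π), ℂ) := ⟨AddCircle.liftIco (2*π) 0 f,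
    AddCircle.liftIco_continuous hper (by rwa [zero_add])⟩ with hF
  have hcoeff : ∀ n : ℤ, fourierCoeff (⇑F) n = fourierCoeffOn Real.two_pi_pos f n := by
    intro n
    have h := fourierCoeff_liftIco_eq (T := 2*π) (a := 0) f n
    simp only [zero_add] at h
    exact h
  set FL := ContinuousMap.toLp (E := ℂ) 2 AddCircle.haarAddCircle ℂ F with hFL
  have hcoeff2 : ∀ n : ℤ, fourierCoeff (FL : AddCircle (2*π) → ℂ) n
      = fourierCoeffOn Real.two_pi_pos f n := by
    intro n; rw [fourierCoeff_toLp, hcoeff]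
  constructor
  · have hmem := lp.memℓp (fourierBasis.repr FL)
    have hs := hmem.summable (by norm_num : (0:ℝ) < (2:ENNReal).toReal)
    have he : (fun n : ℤ => ‖fourierCoeffOn Real.two_pi_pos f n‖^2)
        = fun n : ℤ => ‖fourierBasis.repr FL n‖ ^ (2:ENNReal).toReal := by
      funext n
      rw [fourierBasis_repr, hcoeff2 n]
      have h2 : ((2:ENNReal)).toReal = ((2:ℕ):ℝ) := by norm_num
      rw [h2, Real.rpow_natCast]
    rw [he]; exact hs
  · have hP := tsum_sq_fourierCoeff FL
    simp_rw [hcoeff2] at hP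
    rw [hP]
    have h1 : (∫ t, ‖FL t‖^2 ∂AddCircle.haarAddCircle)
        = ∫ t, ‖F t‖^2 ∂AddCircle.haarAddCircle := by
      refine integral_congr_ae ?_
      filter_upwards [ContinuousMap.coeFn_toLp (p := 2) AddCircle.haarAddCircle (𝕜 := ℂ) F]
        with t ht
      rw [ht]
    have h2 : (∫ t : AddCircle (2*π), ‖F t‖^2)
        = (2*π) * ∫ t, ‖F t‖^2 ∂AddCircle.haarAddCircle := by
      rw [AddCircle.volume_eq_smul_haarAddCircle, MeasureTheory.integral_smul_measure,
        ENNReal.toReal_ofReal Real.two_pi_pos.le, smul_eq_mul]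
    have h3 := AddCircle.intervalIntegral_preimage (2*π) 0
      (fun t : AddCircle (2*π) => ‖F t‖^2)
    simp only [zero_add] at h3
    have h4 : (∫ θ in (0:ℝ)..(2*π), ‖F (θ : AddCircle (2*π))‖^2)
        = ∫ θ in (0:ℝ)..(2*π), ‖f θ‖^2 := by
      refine intervalIntegral.integral_congr fun x hx => ?_
      rw [uIcc_of_le Real.two_pi_pos.le] at hx
      rcases eq_or_lt_of_le hx.2 with h | h
      · have e0 : ((x:ℝ) : AddCircle (2*π)) = ((0:ℝ) : AddCircle (2*π)) := by
          rw [h]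
          simpa using AddCircle.coe_add_period (2*π) 0
        have e1 : F ((x:ℝ) : AddCircle (2*π)) = f 0 := by
          rw [e0, hF]
          exact AddCircle.liftIco_coe_apply (by constructor <;> simp [Real.pi_pos])
        rw [e1, hper, zero_add, h]
      · have e1 : F ((x:ℝ) : AddCircle (2*π)) = f x := by
          rw [hF]
          exact AddCircle.liftIco_coe_apply ⟨hx.1, by simpa using h⟩
        rw [e1]
    rw [h1, ← h4, h3, h2]
    field_simp

lemma my_wirtinger (f f' : ℝ → ℂ) (hder : ∀ x, HasDerivAt f (f' x) x)
    (hf' : Continuous f') (hper : ∀ x, f (x + 2*π) = f x) :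
    (∫ θ in (0:ℝ)..(2*π), ‖f θ‖^2)
      - (1/(2*π)) * ‖∫ θ in (0:ℝ)..(2*π), f θ‖^2
      ≤ ∫ θ in (0:ℝ)..(2*π), ‖f' θ‖^2 := by
  have hfc : Continuous f := by
    rw [continuous_iff_continuousAt]; exact fun x => (hder x).continuousAt
  have hper' : ∀ x : ℝ, f' (x + 2*π) = f' x := by
    intro x
    have h1 : HasDerivAt (fun y : ℝ => f (y + 2*π)) (f' (x + 2*π)) x := by
      have hh : HasDerivAt (fun y : ℝ => y + 2*π) 1 x := by
        simpa using (hasDerivAt_id x).add_const (2*π)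
      have := (hder (x + 2*π)).scomp x hh
      simpa [Function.comp_def] using this
    have h2 : (fun y : ℝ => f (y + 2*π)) = f := funext hper
    rw [h2] at h1
    exact h1.unique (hder x)
  set A : ℤ → ℂ := fourierCoeffOn Real.two_pi_pos f with hA
  set B : ℤ → ℂ := fourierCoeffOn Real.two_pi_pos f' with hB
  obtain ⟨hsa, hpa⟩ := my_parseval f hfc.continuousOn (by rw [zero_add, ← hper 0, zero_add])
  obtain ⟨hsb, hpb⟩ := my_parseval f' hf'.continuousOn (by rw [zero_add, ← hper' 0, zero_add])
  -- value of A 0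
  have hA0 : ‖A 0‖^2 = (1/(2*π))^2 * ‖∫ θ in (0:ℝ)..(2*π), f θ‖^2 := by
    have h := fourierCoeffOn_eq_integral f 0 Real.two_pi_pos
    simp only [neg_zero, fourier_zero, one_smul, sub_zero] at h
    rw [hA, h, norm_smul, mul_pow, Real.norm_eq_abs, abs_of_pos (by positivity : (0:ℝ) < 1/(2*π))]
  -- coefficient comparison
  have hfe : f (2*π) = f 0 := by rw [← hper 0, zero_add]
  have key : ∀ n : ℤ, n ≠ 0 → ‖A n‖^2 ≤ ‖B n‖^2 := by
    intro n hn
    have h := fourierCoeffOn_of_hasDerivAt Real.two_pi_pos hn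
      (fun x _ => hder x) (hf'.intervalIntegrable 0 (2*π))
    have hn' : (n:ℂ) ≠ 0 := Int.cast_ne_zero.mpr hn
    have hπ : (π:ℂ) ≠ 0 := Complex.ofReal_ne_zero.mpr Real.pi_ne_zero
    have hAe : A n = B n / (Complex.I * n) := by
      rw [hA, h, hfe, sub_self, mul_zero, zero_sub, hB]
      push_cast
      field_simp
      ring
    have hIn : ‖Complex.I * (n:ℂ)‖ = |(n:ℝ)| := by
      simp
    have hnorm : ‖A n‖ = ‖B n‖ / |(n:ℝ)| := by
      rw [hAe, norm_div, hIn]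
    rw [hnorm, div_pow]
    have h1 : (1:ℝ) ≤ |(n:ℝ)|^2 := by
      have : (1:ℝ) ≤ |(n:ℝ)| := by
        rw [← Int.cast_abs]
        exact_mod_cast Int.one_le_abs hn
      nlinarith
    exact div_le_self (sq_nonneg _) h1
  -- tsum comparison
  have hsum0 : ∑' n : ℤ, ‖A n‖^2 ≤ ‖A 0‖^2 + ∑' n : ℤ, ‖B n‖^2 := by
    rw [Summable.tsum_eq_add_tsum_ite hsa 0]
    refine add_le_add le_rfl ?_
    refine Summable.tsum_le_tsum (fun n => ?_) ?_ hsb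
    · by_cases hn : n = 0
      · simp [hn, sq_nonneg]
      · simpa [hn] using key n hn
    · refine Summable.of_nonneg_of_le (fun n => ?_) (fun n => ?_) hsa
      · by_cases hn : n = 0 <;> simp [hn, sq_nonneg]
      · by_cases hn : n = 0 <;> simp [hn, sq_nonneg]
  rw [hpa, hpb, hA0] at hsum0
  have hπ : (0:ℝ) < π := Real.pi_pos
  have hne : (2*π) ≠ 0 := ne_of_gt Real.two_pi_pos
  have h2 := mul_le_mul_of_nonneg_left hsum0 Real.two_pi_pos.le
  have e1 : (2*π) * ((1/(2*π)) * ∫ θ in (0:ℝ)..(2*π), ‖f θ‖^2)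
      = ∫ θ in (0:ℝ)..(2*π), ‖f θ‖^2 := by field_simp
  have e2 : (2*π) * ((1/(2*π))^2 * ‖∫ θ in (0:ℝ)..(2*π), f θ‖^2
        + (1/(2*π)) * ∫ θ in (0:ℝ)..(2*π), ‖f' θ‖^2)
      = (1/(2*π)) * ‖∫ θ in (0:ℝ)..(2*π), f θ‖^2
        + ∫ θ in (0:ℝ)..(2*π), ‖f' θ‖^2 := by
    field_simp
  rw [e1, e2] at h2
  linarith

open Complex Real in
/-- The convexity estimate `L″(t) ≥ 4L(t) − (1/π)(‖c₋‖² + ‖c₊‖²)` in integral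
form, for two holomorphic functions `G₋, G₊` on an annulus. -/
theorem stmt_18 (R₀ R₁ : ℝ) (hR₀ : 0 ≤ R₀) (hR : R₀ < R₁) (Gm Gp : ℂ → ℂ)
    (hGm : DifferentiableOn ℂ Gm
      {z : ℂ | R₀ < ‖z‖ ∧ ‖z‖ < R₁})
    (hGp : DifferentiableOn ℂ Gp
      {z : ℂ | R₀ < ‖z‖ ∧ ‖z‖ < R₁})
    (r : ℝ) (hr₀ : R₀ < r) (hr₁ : r < R₁) (cm cp : ℂ)
    (hcm : cm = ∫ θ in (0:ℝ)..(2 * π),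
      Gm ((r : ℂ) * Complex.exp (θ * Complex.I)))
    (hcp : cp = ∫ θ in (0:ℝ)..(2 * π),
      Gp ((r : ℂ) * Complex.exp (θ * Complex.I))) :
    2 * r ^ 2 * ∫ θ in (0:ℝ)..(2 * π),
        (‖deriv Gm ((r : ℂ) * Complex.exp (θ * Complex.I))‖ ^ 2
          + ‖deriv Gp ((r : ℂ) * Complex.exp (θ * Complex.I))‖ ^ 2)
      ≥ 2 * (∫ θ in (0:ℝ)..(2 * π),
          (‖Gm ((r : ℂ) * Complex.exp (θ * Complex.I))‖ ^ 2
            + ‖Gp ((r : ℂ) * Complex.exp (θ * Complex.I))‖ ^ 2))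
        - (1 / π) * (‖cm‖ ^ 2 + ‖cp‖ ^ 2) := by
  set S : Set ℂ := {z : ℂ | R₀ < ‖z‖ ∧ ‖z‖ < R₁} with hS
  have hopen : IsOpen S := by
    have : S = (fun z : ℂ => ‖z‖) ⁻¹' (Set.Ioo R₀ R₁) := rfl
    rw [this]
    exact isOpen_Ioo.preimage continuous_norm
  have hrpos : 0 < r := lt_of_le_of_lt hR₀ hr₀
  set γ : ℝ → ℂ := fun θ => (r : ℂ) * Complex.exp (θ * Complex.I) with hγdef
  have hγmem : ∀ θ : ℝ, γ θ ∈ S := by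
    intro θ
    have : ‖γ θ‖ = r := by
      rw [hγdef]
      simp [map_mul, Complex.norm_real, abs_of_pos hrpos,
        Complex.norm_exp_ofReal_mul_I]
    constructor <;> rw [this] <;> assumption
  have hγcont : Continuous γ := by fun_prop
  have hγder : ∀ θ : ℝ, HasDerivAt γ ((r : ℂ) * (Complex.exp (θ * Complex.I) * Complex.I)) θ := by
    intro θ
    have h1 : HasDerivAt (fun θ : ℝ => (θ : ℂ) * Complex.I) Complex.I θ := by
      have := ((hasDerivAt_id ((θ:ℝ):ℂ)).mul_const Complex.I)
      simpa using this.comp_ofReal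
    exact (h1.cexp).const_mul _
  have hγper : ∀ θ : ℝ, γ (θ + 2*π) = γ θ := by
    intro θ
    show (r:ℂ) * Complex.exp (((θ + 2*π : ℝ) : ℂ) * Complex.I)
      = (r:ℂ) * Complex.exp ((θ:ℂ) * Complex.I)
    have he : ((θ + 2*π : ℝ) : ℂ) * Complex.I = θ * Complex.I + 2*π*Complex.I := by
      push_cast; ring
    rw [he, Complex.exp_add, Complex.exp_two_pi_mul_I, mul_one]
  -- data for one function G
  have master : ∀ G : ℂ → ℂ, DifferentiableOn ℂ G S →
      (∫ θ in (0:ℝ)..(2*π), ‖G (γ θ)‖^2)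
        - (1/(2*π)) * ‖∫ θ in (0:ℝ)..(2*π), G (γ θ)‖^2
        ≤ r^2 * ∫ θ in (0:ℝ)..(2*π), ‖deriv G (γ θ)‖^2 := by
    intro G hG
    have hdG : ContinuousOn (deriv G) S :=
      ((hG.analyticOnNhd hopen).deriv).continuousOn
    set f' : ℝ → ℂ := fun θ => deriv G (γ θ) * ((r : ℂ) * (Complex.exp (θ * Complex.I) * Complex.I))
      with hf'def
    have hder : ∀ θ : ℝ, HasDerivAt (fun θ => G (γ θ)) (f' θ) θ := by
      intro θ
      have h1 : HasDerivAt G (deriv G (γ θ)) (γ θ) :=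
        (hG.differentiableAt (hopen.mem_nhds (hγmem θ))).hasDerivAt
      have := h1.comp θ (hγder θ)
      simpa [Function.comp_def, hf'def] using this
    have hf'cont : Continuous f' := by
      rw [hf'def]
      refine Continuous.mul ?_ (by fun_prop)
      exact hdG.comp_continuous hγcont hγmem
    have hw := my_wirtinger (fun θ => G (γ θ)) f' hder hf'cont
      (fun θ => congrArg G (hγper θ))
    have hnorm : ∀ θ : ℝ, ‖f' θ‖^2 = r^2 * ‖deriv G (γ θ)‖^2 := by
      intro θ
      rw [hf'def]
      simp only [norm_mul, Complex.norm_real, Real.norm_eq_abs,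
        Complex.norm_exp_ofReal_mul_I, Complex.norm_I, abs_of_pos hrpos,
        mul_one, one_mul]
      ring
    have hint : (∫ θ in (0:ℝ)..(2*π), ‖f' θ‖^2)
        = r^2 * ∫ θ in (0:ℝ)..(2*π), ‖deriv G (γ θ)‖^2 := by
      rw [← intervalIntegral.integral_const_mul]
      exact intervalIntegral.integral_congr fun θ _ => hnorm θ
    rw [hint] at hw
    exact hw
  have hm := master Gm hGm
  have hp := master Gp hGp
  -- split the integrals
  have hGmc : Continuous fun θ : ℝ => ‖Gm (γ θ)‖^2 := by
    have : Continuous fun θ : ℝ => Gm (γ θ) :=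
      (hGm.continuousOn).comp_continuous hγcont hγmem
    exact this.norm.pow 2
  have hGpc : Continuous fun θ : ℝ => ‖Gp (γ θ)‖^2 := by
    have : Continuous fun θ : ℝ => Gp (γ θ) :=
      (hGp.continuousOn).comp_continuous hγcont hγmem
    exact this.norm.pow 2
  have hdmc : Continuous fun θ : ℝ => ‖deriv Gm (γ θ)‖^2 := by
    have : Continuous fun θ : ℝ => deriv Gm (γ θ) :=
      (((hGm.analyticOnNhd hopen).deriv).continuousOn).comp_continuous hγcont hγmem
    exact this.norm.pow 2
  have hdpc : Continuous fun θ : ℝ => ‖deriv Gp (γ θ)‖^2 := by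
    have : Continuous fun θ : ℝ => deriv Gp (γ θ) :=
      (((hGp.analyticOnNhd hopen).deriv).continuousOn).comp_continuous hγcont hγmem
    exact this.norm.pow 2
  have hsplit1 : (∫ θ in (0:ℝ)..(2*π), (‖deriv Gm (γ θ)‖^2 + ‖deriv Gp (γ θ)‖^2))
      = (∫ θ in (0:ℝ)..(2*π), ‖deriv Gm (γ θ)‖^2)
        + (∫ θ in (0:ℝ)..(2*π), ‖deriv Gp (γ θ)‖^2) :=
    intervalIntegral.integral_add (hdmc.intervalIntegrable _ _) (hdpc.intervalIntegrable _ _)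
  have hsplit2 : (∫ θ in (0:ℝ)..(2*π), (‖Gm (γ θ)‖^2 + ‖Gp (γ θ)‖^2))
      = (∫ θ in (0:ℝ)..(2*π), ‖Gm (γ θ)‖^2)
        + (∫ θ in (0:ℝ)..(2*π), ‖Gp (γ θ)‖^2) :=
    intervalIntegral.integral_add (hGmc.intervalIntegrable _ _) (hGpc.intervalIntegrable _ _)
  rw [ge_iff_le, hsplit1, hsplit2]
  rw [← hcm] at hm
  rw [← hcp] at hp
  have hpi : (1:ℝ)/π = 2 * (1/(2*π)) := by
    field_simp
  rw [hpi]
  nlinarith [hm, hp]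
end
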